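/- arXiv:2301.09643 — 2 statements merged into one kernel-verified Lean document; each statement's English description precedes it below -/
import Mathlib

section
/- The sequence of p-golden ratios Φ_p tends to 2 as p → ∞. -/
lemma golden_bounds (p : ℕ) (hp : 2 ≤ p) (x : ℝ) (hx : 0 < x)
    (heq : x ^ p - (∑ k ∈ Finset.Icc 1 (p - 1), x ^ k) - 1 = 0) :
    2 - 1 / (p : ℝ) ≤ x ∧ x ≤ 2 := by
  set S := ∑ k ∈ Finset.Icc 1 (p - 1), x ^ k with hS
  have hpow : x ^ p = S + 1 := by linarith
  -- 1 < x
  have hmem : (1 : ℕ) ∈ Finset.Icc 1 (p - 1) := by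
    simp only [Finset.mem_Icc]; omega
  have hxS : x ≤ S := by
    have := Finset.single_le_sum (f := fun k => x ^ k)
      (fun i _ => by positivity) hmem
    simpa using this
  have hx1 : 1 < x := by
    by_contra hle
    push_neg at hle
    have : x ^ p ≤ x ^ 1 := pow_le_pow_of_le_one hx.le hle (by omega)
    simp at this
    linarith
  -- sum over range
  have hrange : ∑ k ∈ Finset.range p, x ^ k = 1 + S := by
    have h1 : Finset.range p = Finset.Ico 0 p := by
      rw [Finset.range_eq_Ico]
    have h2 : Finset.Ico 1 p = Finset.Icc 1 (p - 1) := by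
      rw [← Finset.Ico_add_one_right_eq_Icc]
      congr 1
      omega
    rw [h1, ← Finset.sum_Ico_consecutive _ (Nat.zero_le 1) (by omega : 1 ≤ p), h2]
    simp [hS]
  -- geometric sum identity
  have hgeom : (∑ k ∈ Finset.range p, x ^ k) * (x - 1) = x ^ p - 1 := geom_sum_mul x p
  rw [hrange] at hgeom
  have hkey : x ^ p * (2 - x) = 1 := by nlinarith [hpow, hgeom]
  -- x^p ≥ p
  have hSp : (p : ℝ) - 1 ≤ S := by
    have h0 := Finset.card_nsmul_le_sum (Finset.Icc 1 (p - 1)) (fun k => x ^ k) 1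
      (fun i _ => one_le_pow₀ hx1.le)
    have hcard : (Finset.Icc 1 (p - 1)).card = p - 1 := by
      rw [Nat.card_Icc]; omega
    rw [hcard, nsmul_eq_mul, mul_one] at h0
    have : ((p - 1 : ℕ) : ℝ) ≤ S := h0
    have hcast : ((p - 1 : ℕ) : ℝ) = (p : ℝ) - 1 := by
      have : (1:ℕ) ≤ p := by omega
      push_cast [this]; ring
    linarith [hcast ▸ this]
  have hpR : (0:ℝ) < p := by positivity
  have hxp : (p : ℝ) ≤ x ^ p := by rw [hpow]; linarith
  have hxppos : (0:ℝ) < x ^ p := by positivity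
  have h2x : 2 - x = 1 / x ^ p := by field_simp; linarith [hkey]
  constructor
  · have : 1 / x ^ p ≤ 1 / (p : ℝ) := by
      apply one_div_le_one_div_of_le hpR hxp
    linarith [h2x ▸ this]
  · have : 0 < 1 / x ^ p := by positivity
    linarith [h2x ▸ this]

theorem p_golden_ratio_tendsto_two (Φ : ℕ → ℝ)
    (h : ∀ p, 2 ≤ p → 0 < Φ p ∧
      (Φ p) ^ p - (∑ k ∈ Finset.Icc 1 (p - 1), (Φ p) ^ k) - 1 = 0) :
    Filter.Tendsto Φ Filter.atTop (nhds 2) := by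
  have hlo : Filter.Tendsto (fun p : ℕ => 2 - 1 / (p : ℝ)) Filter.atTop (nhds 2) := by
    have := tendsto_one_div_atTop_nhds_zero_nat (𝕜 := ℝ)
    have h2 : Filter.Tendsto (fun _ : ℕ => (2:ℝ)) Filter.atTop (nhds 2) := tendsto_const_nhds
    simpa using h2.sub this
  have hhi : Filter.Tendsto (fun _ : ℕ => (2:ℝ)) Filter.atTop (nhds 2) := tendsto_const_nhds
  refine tendsto_of_tendsto_of_tendsto_of_le_of_le' hlo hhi ?_ ?_
  · filter_upwards [Filter.eventually_ge_atTop 2] with p hp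
    exact (golden_bounds p hp (Φ p) (h p hp).1 (h p hp).2).1
  · filter_upwards [Filter.eventually_ge_atTop 2] with p hp
    exact (golden_bounds p hp (Φ p) (h p hp).1 (h p hp).2).2
end

section
/- For every integer p ≥ 2, the p-golden ratio Φ_p satisfies Φ_p ≥ 2 − 2^{1−p}, i.e., X_p(2 − 2^{1−p}) ≤ 0 where X_p(x) = x^p − ∑_{k=1}^{p−1} x^k − 1. -/
private lemma two_mul_le_two_pow {p : ℕ} (hp : 2 ≤ p) : 2 * p ≤ 2 ^ p := by
  induction p with
  | zero => omega
  | succ n ih =>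
    rcases Nat.lt_or_ge n 2 with h | h
    · interval_cases n <;> norm_num
    · have := ih h
      have h4 : 4 ≤ 2 ^ n := by
        calc 4 = 2 ^ 2 := rfl
        _ ≤ 2 ^ n := Nat.pow_le_pow_right (by norm_num) h
      rw [pow_succ]; omega

theorem p_golden_ratio_lower_bound (p : ℕ) (hp : 2 ≤ p) (Φ : ℝ)
    (hpos : 0 < Φ)
    (hroot : Φ ^ p - (∑ k ∈ Finset.Icc 1 (p - 1), Φ ^ k) - 1 = 0)
    (huniq : ∀ y : ℝ, 0 < y →
      y ^ p - (∑ k ∈ Finset.Icc 1 (p - 1), y ^ k) - 1 = 0 → y = Φ) :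
    Φ ≥ 2 - 2 ^ ((1 : ℤ) - p) ∧
    (2 - 2 ^ ((1 : ℤ) - p) : ℝ) ^ p -
      (∑ k ∈ Finset.Icc 1 (p - 1), (2 - 2 ^ ((1 : ℤ) - p) : ℝ) ^ k) - 1 ≤ 0 := by
  have hc : (2:ℝ) ^ ((1:ℤ) - p) = 2 / 2 ^ p := by
    rw [zpow_sub₀ (by norm_num : (2:ℝ) ≠ 0), zpow_one, zpow_natCast]
  set a : ℝ := 2 - 2 ^ ((1:ℤ) - p) with ha
  have h2ppos : (0:ℝ) < 2 ^ p := by positivity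
  have h4 : (4:ℝ) ≤ 2 ^ p := by
    calc (4:ℝ) = 2 ^ 2 := by norm_num
    _ ≤ 2 ^ p := pow_le_pow_right₀ (by norm_num) hp
  have hchalf : (2:ℝ) / 2 ^ p ≤ 1 / 2 := by
    rw [div_le_div_iff₀ h2ppos (by norm_num)]; linarith
  have hcpos : (0:ℝ) < 2 / 2 ^ p := by positivity
  have ha1 : 1 < a := by rw [ha, hc]; linarith
  have ha2 : a < 2 := by rw [ha, hc]; linarith
  -- geometric sum formula
  have key : ∀ x : ℝ, x ≠ 1 →
      (∑ k ∈ Finset.Icc 1 (p - 1), x ^ k) = (x ^ p - 1) / (x - 1) - 1 := by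
    intro x hx
    obtain ⟨q, rfl⟩ : ∃ q, p = q + 1 := ⟨p - 1, by omega⟩
    have h1 : Finset.Icc 1 q = (Finset.Icc 0 q).erase 0 := by
      rw [Finset.Icc_erase_left]
      ext k; simp [Nat.lt_iff_add_one_le]
    have h2 : Finset.Icc 0 q = Finset.range (q + 1) := by
      rw [Finset.range_eq_Ico, Finset.Ico_add_one_right_eq_Icc]
    have h3 : (∑ k ∈ Finset.range (q + 1), x ^ k) = (x ^ (q+1) - 1) / (x - 1) :=
      geom_sum_eq hx _
    have h0 : (0:ℕ) ∈ Finset.Icc 0 q := by simp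
    have h5 : x ^ 0 + ∑ k ∈ (Finset.Icc 0 q).erase 0, x ^ k
        = ∑ k ∈ Finset.Icc 0 q, x ^ k := Finset.add_sum_erase _ (fun k => x ^ k) h0
    simp only [Nat.add_sub_cancel, h1]
    rw [← h3, ← h2, ← h5, pow_zero]
    ring
  have f2 : (2:ℝ) ^ p - (∑ k ∈ Finset.Icc 1 (p - 1), (2:ℝ) ^ k) - 1 = 1 := by
    rw [key 2 (by norm_num)]
    field_simp
    ring
  have hane : a ≠ 1 := by linarith
  have hsub : (0:ℝ) < a - 1 := by linarith
  -- key estimate: a ^ p ≥ 2 ^ p / 2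
  have hap : (2:ℝ) ^ p * (1 - 1 / 2 ^ p) ^ p = a ^ p := by
    rw [← mul_pow]
    congr 1
    rw [ha, hc]; field_simp
  have hbern : 1 - (p:ℝ) / 2 ^ p ≤ (1 - 1 / 2 ^ p) ^ p := by
    have hhalf : (1:ℝ) / 2 ^ p ≤ 1 / 2 := by
      rw [div_le_div_iff₀ h2ppos (by norm_num)]; linarith
    have hb := one_add_mul_le_pow (a := -(1 / 2 ^ p : ℝ)) (by linarith) p
    calc 1 - (p:ℝ) / 2 ^ p = 1 + p * (-(1 / 2 ^ p)) := by ring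
    _ ≤ (1 + -(1 / 2 ^ p)) ^ p := hb
    _ = (1 - 1 / 2 ^ p) ^ p := by ring_nf
  have hple : (p:ℝ) / 2 ^ p ≤ 1 / 2 := by
    have h2p : (2:ℝ) * p ≤ 2 ^ p := by
      have := two_mul_le_two_pow hp
      calc (2:ℝ) * p = ((2 * p : ℕ) : ℝ) := by push_cast; ring
      _ ≤ ((2 ^ p : ℕ) : ℝ) := by exact_mod_cast this
      _ = 2 ^ p := by push_cast; ring
    rw [div_le_div_iff₀ h2ppos (by norm_num)]
    linarith
  have hapge : (2:ℝ) ^ p / 2 ≤ a ^ p := by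
    have hmul : (2:ℝ) ^ p * (1 - (p:ℝ) / 2 ^ p) ≤ 2 ^ p * (1 - 1 / 2 ^ p) ^ p :=
      mul_le_mul_of_nonneg_left hbern h2ppos.le
    have hexp : (2:ℝ) ^ p * (1 - (p:ℝ) / 2 ^ p) = 2 ^ p - p := by
      field_simp
    nlinarith
  have hkey : 1 ≤ a ^ p * (2 / 2 ^ p) := by
    have := mul_le_mul_of_nonneg_right hapge hcpos.le
    have hone : (2:ℝ) ^ p / 2 * (2 / 2 ^ p) = 1 := by field_simp
    linarith [hone ▸ this]
  -- X_p(a) ≤ 0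
  have hfa : a ^ p - (∑ k ∈ Finset.Icc 1 (p - 1), a ^ k) - 1 ≤ 0 := by
    rw [key a hane]
    have hdiv : a ^ p ≤ (a ^ p - 1) / (a - 1) := by
      rw [le_div_iff₀ hsub]
      have ham2 : a - 2 = -(2 / 2 ^ p) := by rw [ha, hc]; ring
      nlinarith
    linarith
  refine ⟨?_, hfa⟩
  -- IVT on [a, 2]
  have hcont : Continuous fun x : ℝ =>
      x ^ p - (∑ k ∈ Finset.Icc 1 (p - 1), x ^ k) - 1 := by
    apply Continuous.sub
    apply Continuous.sub
    · exact continuous_pow p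
    · exact continuous_finset_sum _ fun k _ => continuous_pow k
    · exact continuous_const
  have hivt := intermediate_value_Icc (le_of_lt ha2) hcont.continuousOn
  have h0mem : (0:ℝ) ∈ Set.Icc (a ^ p - (∑ k ∈ Finset.Icc 1 (p - 1), a ^ k) - 1)
      ((2:ℝ) ^ p - (∑ k ∈ Finset.Icc 1 (p - 1), (2:ℝ) ^ k) - 1) := by
    rw [f2]; exact ⟨hfa, by norm_num⟩
  obtain ⟨y, hy, hfy⟩ := hivt h0mem
  have hyeq : y = Φ := huniq y (by linarith [hy.1]) hfy
  rw [← hyeq]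
  exact hy.1
end
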